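/- arXiv:gr-qc/0111022 — 2 statements merged into one kernel-verified Lean document; each statement's English description precedes it below -/
import Mathlib

section
/- Let G be a compact topological group with normalized Haar probability measure μ. Let V and W be finite-dimensional complex normed vector spaces carrying continuous representations ρ : G → GL(V) and ρ' : G → GL(W), and let ρ ⊗ ρ' denote the tensor product representation on V ⊗ W. Then the averaging maps satisfy (T_ρ ⊗ id_W) ∘ T_{ρ⊗ρ'} = T_ρ ⊗ T_{ρ'} as linear maps V ⊗ W → V ⊗ W, where T_σ denotes the map u ↦ ∫_G σ(g)u dμ(g) for a representation σ. -/
open MeasureTheory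

/-- The identity `(T_ρ ⊗ id_W) ∘ T_{ρ⊗ρ'} = T_ρ ⊗ T_{ρ'}` as linear maps
`V ⊗ W → V ⊗ W`.

The tensor product `V ⊗ W` is modelled by a normed space `U` together with a
bilinear map `t : V → W → U` whose lift `V ⊗[ℂ] W →ₗ[ℂ] U` is bijective.
`S` is the averaging map `T_ρ` (as a linear map) and `P` is the linear map
`T_ρ ⊗ id_W` on `U`, characterized by `P (v ⊗ w) = (S v) ⊗ w`.  Since linear
maps on `V ⊗ W` are determined by their values on pure tensors, the asserted
equality of linear maps is stated on all pure tensors: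
`P (T_{ρ⊗ρ'}(v ⊗ w)) = (T_ρ v) ⊗ (T_{ρ'} w)`. -/
theorem averaging_tensor_identity'
    {G : Type*} [Group G] [TopologicalSpace G] [IsTopologicalGroup G]
    [CompactSpace G] [T2Space G] [MeasurableSpace G] [BorelSpace G]
    (μ : Measure G) [μ.IsHaarMeasure] [IsProbabilityMeasure μ]
    {V : Type*} [NormedAddCommGroup V] [NormedSpace ℂ V] [FiniteDimensional ℂ V]
    {W : Type*} [NormedAddCommGroup W] [NormedSpace ℂ W] [FiniteDimensional ℂ W]
    {U : Type*} [NormedAddCommGroup U] [NormedSpace ℂ U]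
    (t : V →ₗ[ℂ] W →ₗ[ℂ] U) (ht : Function.Bijective (TensorProduct.lift t))
    (ρ : G →* (V ≃L[ℂ] V)) (hρ : ∀ v : V, Continuous fun g => ρ g v)
    (ρ' : G →* (W ≃L[ℂ] W)) (hρ' : ∀ w : W, Continuous fun g => ρ' g w)
    (S : V →ₗ[ℂ] V) (hS : ∀ v : V, S v = ∫ g, ρ g v ∂μ)
    (P : U →ₗ[ℂ] U) (hP : ∀ (v : V) (w : W), P (t v w) = t (S v) w) :
    ∀ (v : V) (w : W),
      P (∫ g, t (ρ g v) (ρ' g w) ∂μ) =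
        t (∫ g, ρ g v ∂μ) (∫ g, ρ' g w ∂μ) := by
  -- U is finite dimensional via the bijection with V ⊗ W
  haveI : FiniteDimensional ℂ U :=
    Module.Finite.of_surjective (TensorProduct.lift t) ht.surjective
  -- Haar measure on a compact group is right invariant
  haveI : μ.IsMulRightInvariant := by
    haveI : LocallyCompactSpace G := inferInstance
    refine ⟨fun g => ?_⟩
    haveI : IsProbabilityMeasure (μ.map (· * g)) :=
      Measure.isProbabilityMeasure_map (measurable_mul_const g).aemeasurable
    exact Measure.isHaarMeasure_eq_of_isProbabilityMeasure (μ.map (· * g)) μ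
  intro v w
  -- continuity and integrability facts
  have htc : ∀ x : V, Continuous (t x) := fun x => (t x).continuous_of_finiteDimensional
  have hcont : Continuous fun g => t (ρ g v) (ρ' g w) := by
    have h2 : Continuous fun p : V × W => t p.1 p.2 := by
      let t'' : V →L[ℂ] W →L[ℂ] U := LinearMap.toContinuousLinearMap
        ((LinearMap.toContinuousLinearMap : (W →ₗ[ℂ] U) ≃ₗ[ℂ] (W →L[ℂ] U)).toLinearMap ∘ₗ t)
      have : (fun p : V × W => t p.1 p.2) = fun p : V × W => t'' p.1 p.2 := rfl
      rw [this]
      exact t''.continuous₂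
    exact h2.comp ((hρ v).prodMk (hρ' w))
  have hint : Integrable (fun g => t (ρ g v) (ρ' g w)) μ :=
    hcont.integrable_of_hasCompactSupport (HasCompactSupport.of_compactSpace _)
  have hintρ : ∀ x : V, Integrable (fun g => ρ g x) μ := fun x =>
    (hρ x).integrable_of_hasCompactSupport (HasCompactSupport.of_compactSpace _)
  have hintρ' : Integrable (fun g => ρ' g w) μ :=
    (hρ' w).integrable_of_hasCompactSupport (HasCompactSupport.of_compactSpace _)
  -- pull P inside the integral
  have hPc : Continuous P := P.continuous_of_finiteDimensional
  have h1 : P (∫ g, t (ρ g v) (ρ' g w) ∂μ)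
      = ∫ g, P (t (ρ g v) (ρ' g w)) ∂μ :=
    ((⟨P, hPc⟩ : U →L[ℂ] U).integral_comp_comm hint).symm
  rw [h1]
  -- S (ρ g v) = S v by right invariance
  have hSconst : ∀ g : G, S (ρ g v) = S v := by
    intro g
    rw [hS, hS]
    have : (fun h => ρ h (ρ g v)) = fun h => ρ (h * g) v := by
      funext h; rw [map_mul]; rfl
    rw [this, integral_mul_right_eq_self (fun h => ρ h v) g]
  simp_rw [hP, hSconst]
  -- pull t (S v) out of the remaining integral
  have h2 : ∫ g, t (S v) (ρ' g w) ∂μ = t (S v) (∫ g, ρ' g w ∂μ) :=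
    (⟨t (S v), htc (S v)⟩ : W →L[ℂ] U).integral_comp_comm hintρ'
  rw [h2, hS]
end

section
/- Let G be a compact topological group with normalized Haar probability measure μ, V a nonzero finite-dimensional complex normed vector space, and ρ : G → GL(V) a continuous irreducible representation. Then for every linear map B : V → V, the 'summation/loop' identity holds: ∫_G Tr(ρ(g) ∘ B) · ρ(g)⁻¹ dμ(g) = (1 / dim V) · B. -/
open MeasureTheory

section SchurAux

variable {G : Type*} [Group G] [TopologicalSpace G] [IsTopologicalGroup G]
    [CompactSpace G] [T2Space G] [MeasurableSpace G] [BorelSpace G]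
    {V : Type*} [NormedAddCommGroup V] [NormedSpace ℂ V]
    [FiniteDimensional ℂ V] [Nontrivial V]

private lemma rho_continuous (ρ : G →* (V ≃L[ℂ] V))
    (hρ : ∀ v : V, Continuous fun g => ρ g v) :
    Continuous fun g : G => ((ρ g : V ≃L[ℂ] V) : V →L[ℂ] V) := by
  classical
  set b := Module.finBasis ℂ V
  set E : (V →L[ℂ] V) →ₗ[ℂ] (Fin (Module.finrank ℂ V) → V) :=
    LinearMap.pi fun i => (ContinuousLinearMap.apply ℂ V (b i)).toLinearMap with hE
  have hinj : Function.Injective E := by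
    intro S T hST
    apply ContinuousLinearMap.coe_injective
    apply b.ext
    intro i
    exact congrFun hST i
  set e : (V →L[ℂ] V) ≃ₗ[ℂ] LinearMap.range E := LinearEquiv.ofInjective E hinj with he
  have hsymm : Continuous e.symm := LinearMap.continuous_of_finiteDimensional _
  have hF : Continuous fun g : G => (⟨E ((ρ g : V ≃L[ℂ] V) : V →L[ℂ] V),
      LinearMap.mem_range_self E _⟩ : LinearMap.range E) := by
    apply Continuous.subtype_mk
    apply continuous_pi
    intro i
    exact hρ (b i)
  have key : ∀ g : G, ((ρ g : V ≃L[ℂ] V) : V →L[ℂ] V) =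
      e.symm ⟨E ((ρ g : V ≃L[ℂ] V) : V →L[ℂ] V), LinearMap.mem_range_self E _⟩ := by
    intro g
    have : (⟨E ((ρ g : V ≃L[ℂ] V) : V →L[ℂ] V), LinearMap.mem_range_self E _⟩ :
        LinearMap.range E) = e ((ρ g : V ≃L[ℂ] V) : V →L[ℂ] V) := by
      apply Subtype.ext
      rfl
    rw [this, LinearEquiv.symm_apply_apply]
  have : (fun g : G => ((ρ g : V ≃L[ℂ] V) : V →L[ℂ] V)) = fun g =>
      e.symm ⟨E ((ρ g : V ≃L[ℂ] V) : V →L[ℂ] V), LinearMap.mem_range_self E _⟩ :=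
    funext key
  rw [this]
  exact hsymm.comp hF

private lemma schur_scalar (ρ : G →* (V ≃L[ℂ] V))
    (hirr : ∀ U : Submodule ℂ V, (∀ g : G, ∀ v ∈ U, ρ g v ∈ U) → U = ⊥ ∨ U = ⊤)
    (T : V →L[ℂ] V)
    (hT : ∀ (g : G) (v : V), T (ρ g v) = ρ g (T v)) :
    ∃ c : ℂ, T = c • (1 : V →L[ℂ] V) := by
  obtain ⟨c, hc⟩ := Module.End.exists_eigenvalue (T : V →ₗ[ℂ] V)
  refine ⟨c, ?_⟩
  have hU : ∀ g : G, ∀ v ∈ Module.End.eigenspace (T : V →ₗ[ℂ] V) c,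
      ρ g v ∈ Module.End.eigenspace (T : V →ₗ[ℂ] V) c := by
    intro g v hv
    rw [Module.End.mem_eigenspace_iff] at hv ⊢
    show T (ρ g v) = c • ρ g v
    rw [hT g v, show (T : V →ₗ[ℂ] V) v = T v from rfl] at *
    rw [hv]
    exact (ρ g).map_smul c v
  rcases hirr _ hU with h | h
  · exact absurd h hc
  · ext v
    have : v ∈ Module.End.eigenspace (T : V →ₗ[ℂ] V) c := h ▸ Submodule.mem_top
    rw [Module.End.mem_eigenspace_iff] at this
    simpa using this


set_option linter.unusedSectionVars false

private lemma haar_right_inv (μ : Measure G) [μ.IsHaarMeasure]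
    [IsProbabilityMeasure μ] : μ.IsMulRightInvariant := by
  constructor
  intro h
  have hP : IsProbabilityMeasure (Measure.map (· * h) μ) :=
    Measure.isProbabilityMeasure_map (measurable_mul_const h).aemeasurable
  have h1 : Measure.IsMulLeftInvariant (Measure.map (· * h) μ) := by
    constructor
    intro g
    rw [Measure.map_map (measurable_const_mul g) (measurable_mul_const h),
      show ((g * ·) ∘ (· * h)) = ((· * h) ∘ (g * ·)) by ext x; simp [mul_assoc],
      ← Measure.map_map (measurable_mul_const h) (measurable_const_mul g),
      map_mul_left_eq_self]
  have h2 : Measure.IsOpenPosMeasure (Measure.map (· * h) μ) := by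
    constructor
    intro U hU hneU
    rw [Measure.map_apply (measurable_mul_const h) hU.measurableSet]
    exact ne_of_gt <| IsOpen.measure_pos μ (hU.preimage (continuous_mul_right h))
      (by obtain ⟨x, hx⟩ := hneU; exact ⟨x * h⁻¹, by simpa using hx⟩)
  have hH : (Measure.map (· * h) μ).IsHaarMeasure :=
    { lt_top_of_isCompact := fun _ _ => measure_lt_top _ _ }
  exact Measure.isHaarMeasure_eq_of_isProbabilityMeasure (Measure.map (· * h) μ) μ

private lemma conj_avg (μ : Measure G) [μ.IsHaarMeasure] [IsProbabilityMeasure μ]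
    (ρ : G →* (V ≃L[ℂ] V)) (hρ : ∀ v : V, Continuous fun g => ρ g v)
    (hirr : ∀ U : Submodule ℂ V, (∀ g : G, ∀ v ∈ U, ρ g v ∈ U) → U = ⊥ ∨ U = ⊤)
    (A : V →L[ℂ] V) :
    ∫ g, (((ρ g⁻¹ : V ≃L[ℂ] V) : V →L[ℂ] V).comp
        (A.comp ((ρ g : V ≃L[ℂ] V) : V →L[ℂ] V))) ∂μ
      = ((LinearMap.trace ℂ V (A : V →ₗ[ℂ] V)) / (Module.finrank ℂ V : ℂ)) •
        (1 : V →L[ℂ] V) := by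
  haveI := haar_right_inv μ
  set R : G → (V →L[ℂ] V) := fun g => ((ρ g : V ≃L[ℂ] V) : V →L[ℂ] V) with hRdef
  have hR : Continuous R := rho_continuous ρ hρ
  have hRmul : ∀ g h : G, (R g).comp (R h) = R (g * h) := by
    intro g h
    ext x
    show ρ g (ρ h x) = ρ (g * h) x
    rw [map_mul]
    rfl
  set F : G → (V →L[ℂ] V) := fun g => (R g⁻¹).comp (A.comp (R g)) with hFdef
  have hFcont : Continuous F :=
    (hR.comp continuous_inv).clm_comp (continuous_const.clm_comp hR)
  have hFint : Integrable F μ :=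
    hFcont.integrable_of_hasCompactSupport (HasCompactSupport.of_compactSpace _)
  set S : V →L[ℂ] V := ∫ g, F g ∂μ with hSdef
  have hcomm : ∀ (h : G) (v : V), S (ρ h v) = ρ h (S v) := by
    intro h v
    have lhs : (R h).comp S = ∫ g, (R h).comp (F g) ∂μ := by
      have := (ContinuousLinearMap.compL ℂ V V V (R h)).integral_comp_comm hFint
      simpa [ContinuousLinearMap.compL_apply] using this.symm
    have key : ∀ g : G, (R h).comp (F g) = (F (g * h⁻¹)).comp (R h) := by
      intro g
      have h1 : (R h).comp (F g) = (R (h * g⁻¹)).comp (A.comp (R g)) := by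
        simp only [hFdef]
        rw [← ContinuousLinearMap.comp_assoc, hRmul]
      have h2 : (F (g * h⁻¹)).comp (R h) = (R (h * g⁻¹)).comp (A.comp (R g)) := by
        simp only [hFdef]
        rw [ContinuousLinearMap.comp_assoc, ContinuousLinearMap.comp_assoc, hRmul,
          inv_mul_cancel_right, mul_inv_rev, inv_inv]
      rw [h1, h2]
    have rhs : ∫ g, (F (g * h⁻¹)).comp (R h) ∂μ = S.comp (R h) := by
      have hint : Integrable (fun g => F (g * h⁻¹)) μ :=
        ((hFcont.comp (continuous_mul_right h⁻¹)).integrable_of_hasCompactSupport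
          (HasCompactSupport.of_compactSpace _))
      have := (((ContinuousLinearMap.compL ℂ V V V).flip (R h)).integral_comp_comm hint)
      simp only [ContinuousLinearMap.flip_apply, ContinuousLinearMap.compL_apply] at this
      rw [this, integral_mul_right_eq_self (fun g => F g) h⁻¹]
    have : (R h).comp S = S.comp (R h) := by
      rw [lhs, integral_congr_ae (Filter.Eventually.of_forall key), rhs]
    exact (ContinuousLinearMap.ext_iff.mp this v).symm
  obtain ⟨c, hc⟩ := schur_scalar ρ hirr S hcomm
  -- compute the trace of S
  set tr : (V →L[ℂ] V) →L[ℂ] ℂ := LinearMap.toContinuousLinearMap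
    ((LinearMap.trace ℂ V).comp (ContinuousLinearMap.coeLM ℂ)) with htrdef
  have htr_apply : ∀ T : V →L[ℂ] V, tr T = LinearMap.trace ℂ V (T : V →ₗ[ℂ] V) := fun _ => rfl
  have htrF : ∀ g : G, tr (F g) = LinearMap.trace ℂ V (A : V →ₗ[ℂ] V) := by
    intro g
    rw [htr_apply]
    have : (F g : V →ₗ[ℂ] V) = (R g⁻¹ : V →ₗ[ℂ] V) * ((A : V →ₗ[ℂ] V) * (R g : V →ₗ[ℂ] V)) := rfl
    rw [this, LinearMap.trace_mul_comm, mul_assoc]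
    have : (R g : V →ₗ[ℂ] V) * (R g⁻¹ : V →ₗ[ℂ] V) = ((R g).comp (R g⁻¹) : V →ₗ[ℂ] V) := rfl
    rw [this, hRmul, mul_inv_cancel]
    have hR1 : R 1 = ContinuousLinearMap.id ℂ V := by
      ext x
      show ρ 1 x = x
      rw [map_one]
      rfl
    have : (R 1 : V →ₗ[ℂ] V) = 1 := by rw [hR1]; rfl
    rw [this, mul_one]
  have htrS : tr S = LinearMap.trace ℂ V (A : V →ₗ[ℂ] V) := by
    rw [hSdef, ← tr.integral_comp_comm hFint]
    simp_rw [htrF]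
    simp
  have hn : ((Module.finrank ℂ V : ℂ)) ≠ 0 :=
    Nat.cast_ne_zero.mpr Module.finrank_pos.ne'
  have hone : ((1 : V →L[ℂ] V) : V →ₗ[ℂ] V) = 1 := rfl
  have hcn : c * (Module.finrank ℂ V : ℂ) = LinearMap.trace ℂ V (A : V →ₗ[ℂ] V) := by
    rw [← htrS, hc, _root_.map_smul, htr_apply, hone, LinearMap.trace_one, smul_eq_mul]
  rw [hc, ← hcn, mul_div_cancel_right₀ _ hn]

private lemma conj_avg_apply (μ : Measure G) [μ.IsHaarMeasure] [IsProbabilityMeasure μ]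
    (ρ : G →* (V ≃L[ℂ] V)) (hρ : ∀ v : V, Continuous fun g => ρ g v)
    (hirr : ∀ U : Submodule ℂ V, (∀ g : G, ∀ v ∈ U, ρ g v ∈ U) → U = ⊥ ∨ U = ⊤)
    (A : V →L[ℂ] V) (w : V) :
    ∫ g, ρ g⁻¹ (A (ρ g w)) ∂μ
      = ((LinearMap.trace ℂ V (A : V →ₗ[ℂ] V)) / (Module.finrank ℂ V : ℂ)) • w := by
  have h := conj_avg μ ρ hρ hirr A
  have hR : Continuous fun g : G => ((ρ g : V ≃L[ℂ] V) : V →L[ℂ] V) := rho_continuous ρ hρ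
  have hFcont : Continuous fun g : G => (((ρ g⁻¹ : V ≃L[ℂ] V) : V →L[ℂ] V).comp
      (A.comp ((ρ g : V ≃L[ℂ] V) : V →L[ℂ] V))) :=
    (hR.comp continuous_inv).clm_comp (continuous_const.clm_comp hR)
  have hFint : Integrable (fun g : G => (((ρ g⁻¹ : V ≃L[ℂ] V) : V →L[ℂ] V).comp
      (A.comp ((ρ g : V ≃L[ℂ] V) : V →L[ℂ] V)))) μ :=
    hFcont.integrable_of_hasCompactSupport (HasCompactSupport.of_compactSpace _)
  have happ := ContinuousLinearMap.integral_apply hFint w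
  rw [h] at happ
  have : ((((LinearMap.trace ℂ V (A : V →ₗ[ℂ] V)) / (Module.finrank ℂ V : ℂ)) •
      (1 : V →L[ℂ] V)) w) = ((LinearMap.trace ℂ V (A : V →ₗ[ℂ] V)) /
      (Module.finrank ℂ V : ℂ)) • w := by simp
  rw [this] at happ
  exact happ.symm

end SchurAux


set_option linter.unusedSectionVars false
set_option maxHeartbeats 1000000

/-- The 'summation/loop' identity: for a continuous irreducible representation
`ρ` of a compact group `G` on a nonzero finite-dimensional complex normed
space `V` and any linear map `B : V → V`,
`∫ Tr(ρ(g) ∘ B) • ρ(g)⁻¹ dμ(g) = (1 / dim V) • B`. -/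
theorem summation_loop_identity
    {G : Type*} [Group G] [TopologicalSpace G] [IsTopologicalGroup G]
    [CompactSpace G] [T2Space G] [MeasurableSpace G] [BorelSpace G]
    (μ : Measure G) [μ.IsHaarMeasure] [IsProbabilityMeasure μ]
    {V : Type*} [NormedAddCommGroup V] [NormedSpace ℂ V]
    [FiniteDimensional ℂ V] [Nontrivial V]
    (ρ : G →* (V ≃L[ℂ] V)) (hρ : ∀ v : V, Continuous fun g => ρ g v)
    (hirr : ∀ U : Submodule ℂ V, (∀ g : G, ∀ v ∈ U, ρ g v ∈ U) → U = ⊥ ∨ U = ⊤) :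
    ∀ B : V →L[ℂ] V,
      (∫ g, (LinearMap.trace ℂ V (((ρ g : V →L[ℂ] V).comp B : V →L[ℂ] V) : V →ₗ[ℂ] V)) •
          (((ρ g)⁻¹ : V ≃L[ℂ] V) : V →L[ℂ] V) ∂μ) =
        (1 / (Module.finrank ℂ V : ℂ)) • B := by
  intro B
  classical
  have hnne : ((Module.finrank ℂ V : ℂ)) ≠ 0 :=
    Nat.cast_ne_zero.mpr Module.finrank_pos.ne'
  set b := Module.finBasis ℂ V with hb
  set φ : Fin (Module.finrank ℂ V) → (V →L[ℂ] ℂ) :=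
    fun i => LinearMap.toContinuousLinearMap (b.coord i) with hφ
  have hR : Continuous fun g : G => ((ρ g : V ≃L[ℂ] V) : V →L[ℂ] V) := rho_continuous ρ hρ
  have hRinv : Continuous fun g : G => ((ρ g⁻¹ : V ≃L[ℂ] V) : V →L[ℂ] V) :=
    hR.comp continuous_inv
  have hinv : ∀ g : G, (((ρ g)⁻¹ : V ≃L[ℂ] V) : V →L[ℂ] V) =
      ((ρ g⁻¹ : V ≃L[ℂ] V) : V →L[ℂ] V) := by
    intro g
    rw [map_inv]
  set tr : (V →L[ℂ] V) →L[ℂ] ℂ := LinearMap.toContinuousLinearMap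
    ((LinearMap.trace ℂ V).comp (ContinuousLinearMap.coeLM ℂ)) with htrdef
  have htrc : Continuous fun g : G =>
      (LinearMap.trace ℂ V (((ρ g : V →L[ℂ] V).comp B : V →L[ℂ] V) : V →ₗ[ℂ] V)) := by
    have : (fun g : G =>
        (LinearMap.trace ℂ V (((ρ g : V →L[ℂ] V).comp B : V →L[ℂ] V) : V →ₗ[ℂ] V))) =
        fun g : G => tr (((ContinuousLinearMap.compL ℂ V V V).flip B)
          ((ρ g : V ≃L[ℂ] V) : V →L[ℂ] V)) := rfl
    rw [this]
    exact tr.continuous.comp ((((ContinuousLinearMap.compL ℂ V V V).flip B).continuous).comp hR)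
  have hIntegrand : Continuous fun g : G =>
      (LinearMap.trace ℂ V (((ρ g : V →L[ℂ] V).comp B : V →L[ℂ] V) : V →ₗ[ℂ] V)) •
        (((ρ g)⁻¹ : V ≃L[ℂ] V) : V →L[ℂ] V) := by
    have : (fun g : G =>
        (LinearMap.trace ℂ V (((ρ g : V →L[ℂ] V).comp B : V →L[ℂ] V) : V →ₗ[ℂ] V)) •
        (((ρ g)⁻¹ : V ≃L[ℂ] V) : V →L[ℂ] V)) = fun g : G =>
        (LinearMap.trace ℂ V (((ρ g : V →L[ℂ] V).comp B : V →L[ℂ] V) : V →ₗ[ℂ] V)) •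
        ((ρ g⁻¹ : V ≃L[ℂ] V) : V →L[ℂ] V) := by
      funext g
      rw [hinv]
    rw [this]
    exact htrc.smul hRinv
  have hInt : Integrable (fun g : G =>
      (LinearMap.trace ℂ V (((ρ g : V →L[ℂ] V).comp B : V →L[ℂ] V) : V →ₗ[ℂ] V)) •
        (((ρ g)⁻¹ : V ≃L[ℂ] V) : V →L[ℂ] V)) μ :=
    hIntegrand.integrable_of_hasCompactSupport (HasCompactSupport.of_compactSpace _)
  apply ContinuousLinearMap.ext
  intro v
  rw [ContinuousLinearMap.integral_apply hInt]
  have htr : ∀ g : G, LinearMap.trace ℂ V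
      (((ρ g : V →L[ℂ] V).comp B : V →L[ℂ] V) : V →ₗ[ℂ] V) =
      ∑ i, φ i (ρ g (B (b i))) := by
    intro g
    rw [LinearMap.trace_eq_matrix_trace ℂ b, Matrix.trace]
    apply Finset.sum_congr rfl
    intro i _
    rw [Matrix.diag_apply, LinearMap.toMatrix_apply]
    rfl
  have step1 : ∫ g, ((LinearMap.trace ℂ V
        (((ρ g : V →L[ℂ] V).comp B : V →L[ℂ] V) : V →ₗ[ℂ] V)) •
        (((ρ g)⁻¹ : V ≃L[ℂ] V) : V →L[ℂ] V)) v ∂μ =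
      ∫ g, ∑ i, ρ g⁻¹ (((φ i).smulRight v) (ρ g (B (b i)))) ∂μ := by
    apply integral_congr_ae
    apply Filter.Eventually.of_forall
    intro g
    dsimp only
    rw [ContinuousLinearMap.smul_apply, htr g, hinv g, Finset.sum_smul]
    apply Finset.sum_congr rfl
    intro i _
    rw [ContinuousLinearMap.smulRight_apply, _root_.map_smul]
    rfl
  rw [step1]
  have hInti : ∀ i : Fin (Module.finrank ℂ V),
      Integrable (fun g : G => ρ g⁻¹ (((φ i).smulRight v) (ρ g (B (b i))))) μ := by
    intro i
    have hc : Continuous fun g : G => ρ g⁻¹ (((φ i).smulRight v) (ρ g (B (b i)))) := by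
      apply hRinv.clm_apply
      exact ((φ i).smulRight v).continuous.comp (hρ (B (b i)))
    exact hc.integrable_of_hasCompactSupport (HasCompactSupport.of_compactSpace _)
  rw [integral_finset_sum _ (fun i _ => hInti i)]
  have step2 : ∀ i : Fin (Module.finrank ℂ V),
      ∫ g, ρ g⁻¹ (((φ i).smulRight v) (ρ g (B (b i)))) ∂μ =
      ((b.repr v i) / (Module.finrank ℂ V : ℂ)) • B (b i) := by
    intro i
    rw [conj_avg_apply μ ρ hρ hirr ((φ i).smulRight v) (B (b i))]
    congr 1
    congr 1
    have hsm : (((φ i).smulRight v : V →L[ℂ] V) : V →ₗ[ℂ] V) =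
        dualTensorHom ℂ V V ((b.coord i) ⊗ₜ[ℂ] v) := by
      ext w
      simp [dualTensorHom_apply]
      rfl
    rw [hsm, LinearMap.trace_eq_contract_apply, contractLeft_apply]
    rfl
  rw [Finset.sum_congr rfl (fun i _ => step2 i)]
  have step3 : ∑ i, ((b.repr v i) / (Module.finrank ℂ V : ℂ)) • B (b i) =
      (1 / (Module.finrank ℂ V : ℂ)) • B v := by
    have : ∀ i : Fin (Module.finrank ℂ V),
        ((b.repr v i) / (Module.finrank ℂ V : ℂ)) • B (b i) =
        (1 / (Module.finrank ℂ V : ℂ)) • ((b.repr v i) • B (b i)) := by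
      intro i
      rw [smul_smul]
      congr 1
      field_simp
    rw [Finset.sum_congr rfl (fun i _ => this i), ← Finset.smul_sum]
    congr 1
    calc ∑ i, (b.repr v i) • B (b i) = ∑ i, B ((b.repr v i) • b i) := by
          apply Finset.sum_congr rfl
          intro i _
          rw [_root_.map_smul]
      _ = B (∑ i, (b.repr v i) • b i) := by rw [map_sum]
      _ = B v := by rw [b.sum_repr]
  rw [step3]
  simp
end
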